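/- Let U, V, W be finite-dimensional real normed spaces, let Z ⊆ U, X ⊆ V, Y ⊆ W be nonempty convex compact sets, and let f : Y → X be an affine map with dim f(Y) < dim X. Then ©(Z, f), defined as the closure in the normed space of affine maps U → V of the set {g : g an affine map U → V with g(Z) ⊆ X and g(Z) ∩ f(Y) = ∅}, endowed with the subspace topology, is a nonempty contractible topological space. -/

import Mathlib

open Set Pointwise

/-- The dimension of a convex set: the dimension of the direction of its affine span. -/
noncomputable def convDim {V : Type*} [AddCommGroup V] [Module ℝ V] (s : Set V) : ℕ :=
  Module.finrank ℝ (affineSpan ℝ s).direction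

namespace ComplAux

open ContinuousAffineMap

variable {U V : Type*} [NormedAddCommGroup U] [NormedSpace ℝ U]
  [NormedAddCommGroup V] [NormedSpace ℝ V]

lemma continuous_constCAM : Continuous fun v : V => const ℝ U v := by
  apply (LipschitzWith.of_dist_le_mul (K := 1) ?_).continuous
  intro v w
  have h1 : const ℝ U v - const ℝ U w = const ℝ U (v - w) := by
    ext u; simp [ContinuousAffineMap.sub_apply, ContinuousAffineMap.coe_const]
  have h2 : ‖const ℝ U (v - w)‖ = ‖v - w‖ := by
    rw [ContinuousAffineMap.norm_def, const_contLinear]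
    simp [ContinuousAffineMap.coe_const]
  rw [dist_eq_norm, dist_eq_norm, h1, h2]
  simp

lemma continuous_toCAM : Continuous fun L : U →L[ℝ] V => L.toContinuousAffineMap := by
  apply (LipschitzWith.of_dist_le_mul (K := 1) ?_).continuous
  intro L M
  have h1 : L.toContinuousAffineMap - M.toContinuousAffineMap
      = (L - M).toContinuousAffineMap := by
    ext u; simp [ContinuousAffineMap.sub_apply]
  have h2 : ‖(L - M).toContinuousAffineMap‖ = ‖L - M‖ := by
    rw [ContinuousAffineMap.norm_eq _ (by simp), ContinuousLinearMap.toContinuousAffineMap_contLinear]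
  rw [dist_eq_norm, dist_eq_norm, h1, h2]
  simp

lemma continuous_contLinear : Continuous fun g : U →ᴬ[ℝ] V => g.contLinear := by
  apply (LipschitzWith.of_dist_le_mul (K := 1) ?_).continuous
  intro g h
  rw [dist_eq_norm, dist_eq_norm, ← ContinuousAffineMap.sub_contLinear]
  simpa using ContinuousAffineMap.norm_contLinear_le (g - h)

lemma continuous_eval0 : Continuous fun g : U →ᴬ[ℝ] V => g 0 := by
  apply (LipschitzWith.of_dist_le_mul (K := 1) ?_).continuous
  intro g h
  rw [dist_eq_norm, dist_eq_norm, ← ContinuousAffineMap.sub_apply]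
  simpa using ContinuousAffineMap.norm_image_zero_le (g - h)

lemma continuous_eval : Continuous fun p : (U →ᴬ[ℝ] V) × U => p.1 p.2 := by
  have hde : (fun p : (U →ᴬ[ℝ] V) × U => p.1 p.2)
      = fun p => p.1.contLinear p.2 + p.1 0 := by
    funext p
    have h := ContinuousAffineMap.decomp p.1
    calc p.1 p.2 = (⇑p.1.contLinear + Function.const U (p.1 0)) p.2 := by rw [← h]
    _ = _ := rfl
  rw [hde]
  exact (isBoundedBilinearMap_apply.continuous.comp
    ((continuous_contLinear.comp continuous_fst).prodMk continuous_snd)).add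
    (continuous_eval0.comp continuous_fst)

noncomputable def F (x₀ : V) (z₀ : U) (t : ℝ) (g : U →ᴬ[ℝ] V) : U →ᴬ[ℝ] V :=
  const ℝ U (max (2*t-1) 0 • x₀ + (1 - max (2*t-1) 0) • g (min (2*t) 1 • z₀)) +
    (((1 - max (2*t-1) 0) * (1 - min (2*t) 1)) • g.contLinear).toContinuousAffineMap

lemma F_apply (x₀ : V) (z₀ : U) (t : ℝ) (g : U →ᴬ[ℝ] V) (u : U) :
    F x₀ z₀ t g u = max (2*t-1) 0 • x₀ +
      (1 - max (2*t-1) 0) • g (min (2*t) 1 • z₀ + (1 - min (2*t) 1) • u) := by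
  set σ := max (2*t-1) 0 with hσ
  set τ := min (2*t) 1 with hτ
  have h := g.map_vadd (τ • z₀) ((1 - τ) • u)
  rw [vadd_eq_add, vadd_eq_add] at h
  have harg : τ • z₀ + (1-τ) • u = (1-τ) • u + τ • z₀ := add_comm _ _
  rw [harg, h, (g.contLinear).map_smul]
  simp only [F, ContinuousAffineMap.add_apply, ContinuousAffineMap.coe_const,
    Function.const_apply, ContinuousLinearMap.coe_toContinuousAffineMap,
    ContinuousLinearMap.smul_apply]
  module

lemma F_cont (x₀ : V) (z₀ : U) :
    Continuous fun p : ℝ × (U →ᴬ[ℝ] V) => F x₀ z₀ p.1 p.2 := by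
  have hσ : Continuous fun t : ℝ => max (2*t-1) 0 :=
    ((continuous_const.mul continuous_id).sub continuous_const).max continuous_const
  have hτ : Continuous fun t : ℝ => min (2*t) 1 :=
    (continuous_const.mul continuous_id).min continuous_const
  have h1 : Continuous fun p : ℝ × (U →ᴬ[ℝ] V) => p.2 (min (2*p.1) 1 • z₀) :=
    continuous_eval.comp (continuous_snd.prodMk
      ((hτ.comp continuous_fst).smul continuous_const))
  exact (continuous_constCAM.comp
      (((hσ.comp continuous_fst).smul continuous_const).add
        ((continuous_const.sub (hσ.comp continuous_fst)).smul h1))).add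
    (continuous_toCAM.comp
      (((continuous_const.sub (hσ.comp continuous_fst)).mul
        (continuous_const.sub (hτ.comp continuous_fst))).smul
        (continuous_contLinear.comp continuous_snd)))

lemma F_zero (x₀ : V) (z₀ : U) (g : U →ᴬ[ℝ] V) : F x₀ z₀ 0 g = g := by
  ext u
  rw [F_apply]
  have h1 : max (2*(0:ℝ)-1) 0 = 0 := by rw [max_eq_right]; norm_num
  have h2 : min (2*(0:ℝ)) 1 = 0 := by rw [min_eq_left] <;> norm_num
  rw [h1, h2]
  simp

lemma F_one (x₀ : V) (z₀ : U) (g : U →ᴬ[ℝ] V) : F x₀ z₀ 1 g = const ℝ U x₀ := by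
  ext u
  rw [F_apply]
  have h1 : max (2*(1:ℝ)-1) 0 = 1 := by rw [max_eq_left] <;> norm_num
  have h2 : min (2*(1:ℝ)) 1 = 1 := by rw [min_eq_right] <;> norm_num
  rw [h1, h2]
  simp [ContinuousAffineMap.coe_const]

lemma dense_aux {B : Set ℝ} (hB : B.Subsingleton) {s : ℝ} (hs : s ∈ Set.Icc (0:ℝ) 1) :
    s ∈ closure (Set.Icc (0:ℝ) 1 \ B) := by
  obtain ⟨h0s, hs1⟩ := hs
  rw [Metric.mem_closure_iff]
  intro ε hε
  set δ := min ε 1 / 2 with hδdef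
  have hm : 0 < min ε 1 := lt_min hε one_pos
  have hδ0 : 0 < δ := by positivity
  have hδε : δ < ε := by
    have : min ε 1 ≤ ε := min_le_left _ _
    simp only [hδdef]; linarith
  have hδ1 : δ ≤ 1 := by
    have : min ε 1 ≤ 1 := min_le_right _ _
    simp only [hδdef]; linarith
  rcases le_or_gt s (1/2) with h | h
  · -- move towards 1
    have key : ∀ r : ℝ, 0 < r → r ≤ 1 → r < ε →
        (1-r)*s + r ∈ Set.Icc (0:ℝ) 1 ∧ dist s ((1-r)*s + r) < ε := by
      intro r hr0 hr1 hrε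
      refine ⟨⟨by nlinarith, by nlinarith⟩, ?_⟩
      rw [Real.dist_eq, abs_of_nonpos (by nlinarith)]
      nlinarith
    have hne : (1-δ)*s + δ ≠ (1-δ/2)*s + δ/2 := by nlinarith
    by_cases hb : (1-δ)*s + δ ∈ B
    · refine ⟨(1-δ/2)*s + δ/2, ⟨(key _ (by linarith) (by linarith) (by linarith)).1, ?_⟩,
        (key _ (by linarith) (by linarith) (by linarith)).2⟩
      intro hb2
      exact hne (hB hb hb2)
    · exact ⟨(1-δ)*s + δ, ⟨(key _ hδ0 hδ1 hδε).1, hb⟩, (key _ hδ0 hδ1 hδε).2⟩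
  · -- move towards 0
    have key : ∀ r : ℝ, 0 < r → r ≤ 1 → r < ε →
        (1-r)*s ∈ Set.Icc (0:ℝ) 1 ∧ dist s ((1-r)*s) < ε := by
      intro r hr0 hr1 hrε
      refine ⟨⟨by nlinarith, by nlinarith⟩, ?_⟩
      rw [Real.dist_eq, abs_of_nonneg (by nlinarith)]
      nlinarith
    have hne : (1-δ)*s ≠ (1-δ/2)*s := by nlinarith
    by_cases hb : (1-δ)*s ∈ B
    · refine ⟨(1-δ/2)*s, ⟨(key _ (by linarith) (by linarith) (by linarith)).1, ?_⟩,
        (key _ (by linarith) (by linarith) (by linarith)).2⟩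
      intro hb2
      exact hne (hB hb hb2)
    · exact ⟨(1-δ)*s, ⟨(key _ hδ0 hδ1 hδε).1, hb⟩, (key _ hδ0 hδ1 hδε).2⟩

end ComplAux

set_option maxHeartbeats 2000000 in
/-- Let `Z ⊆ U`, `X ⊆ V`, `Y ⊆ W` be nonempty convex compact sets in
finite-dimensional real normed spaces and `f : Y → X` affine with `dim f(Y) < dim X`.
Then `©(Z, f)`, the closure in the normed space of affine maps `U → V` of
`{g : g(Z) ⊆ X and g(Z) ∩ f(Y) = ∅}`, is nonempty and contractible (with the subspace
topology). -/
theorem complementing_contractible {U V W : Type*}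
    [NormedAddCommGroup U] [NormedSpace ℝ U] [FiniteDimensional ℝ U]
    [NormedAddCommGroup V] [NormedSpace ℝ V] [FiniteDimensional ℝ V]
    [NormedAddCommGroup W] [NormedSpace ℝ W] [FiniteDimensional ℝ W]
    (Z : Set U) (X : Set V) (Y : Set W)
    (hZne : Z.Nonempty) (hZconv : Convex ℝ Z) (hZcomp : IsCompact Z)
    (hXne : X.Nonempty) (hXconv : Convex ℝ X) (hXcomp : IsCompact X)
    (hYne : Y.Nonempty) (hYconv : Convex ℝ Y) (hYcomp : IsCompact Y)
    (f : W →ᵃ[ℝ] V) (hf : ⇑f '' Y ⊆ X)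
    (hdim : convDim (⇑f '' Y) < convDim X) :
    (closure {g : U →ᴬ[ℝ] V | ⇑g '' Z ⊆ X ∧ ⇑g '' Z ∩ ⇑f '' Y = ∅}).Nonempty ∧
    ContractibleSpace
      ↥(closure {g : U →ᴬ[ℝ] V | ⇑g '' Z ⊆ X ∧ ⇑g '' Z ∩ ⇑f '' Y = ∅}) := by
  classical
  obtain ⟨z₀, hz₀⟩ := hZne
  set S : Set (U →ᴬ[ℝ] V) := {g : U →ᴬ[ℝ] V | ⇑g '' Z ⊆ X ∧ ⇑g '' Z ∩ ⇑f '' Y = ∅}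
    with hSdef
  set A : AffineSubspace ℝ V := affineSpan ℝ (⇑f '' Y) with hAdef
  -- find x₀ ∈ X off the affine span of f '' Y
  have hXA : ¬ (X ⊆ (A : Set V)) := by
    intro hsub
    have h1 : affineSpan ℝ X ≤ A := affineSpan_le.mpr hsub
    have h2 : (affineSpan ℝ X).direction ≤ A.direction := AffineSubspace.direction_le h1
    exact absurd hdim (not_lt.mpr (Submodule.finrank_mono h2))
  obtain ⟨x₀, hx₀X, hx₀A⟩ := not_subset.mp hXA
  have hfYA : ⇑f '' Y ⊆ (A : Set V) := subset_affineSpan ℝ _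
  set g₀ : U →ᴬ[ℝ] V := ContinuousAffineMap.const ℝ U x₀ with hg₀def
  have hg₀S : g₀ ∈ S := by
    constructor
    · rintro v ⟨z, hz, rfl⟩
      simpa [hg₀def, ContinuousAffineMap.coe_const] using hx₀X
    · rw [Set.eq_empty_iff_forall_notMem]
      rintro v ⟨⟨z, hz, rfl⟩, hv⟩
      apply hx₀A
      have : (g₀ : U → V) z = x₀ := by simp [hg₀def, ContinuousAffineMap.coe_const]
      rw [this] at hv
      exact hfYA hv
  -- evaluation of closure members lands in X
  have hclX : ∀ g ∈ closure S, ∀ z ∈ Z, g z ∈ X := by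
    intro g hg z hz
    have hc : Continuous fun h : U →ᴬ[ℝ] V => h z :=
      ComplAux.continuous_eval.comp (continuous_id.prodMk continuous_const)
    have hmap : Set.MapsTo (fun h : U →ᴬ[ℝ] V => h z) S X := by
      intro h hh
      exact hh.1 ⟨z, hz, rfl⟩
    have := map_mem_closure hc hg hmap
    rwa [IsClosed.closure_eq hXcomp.isClosed] at this
  -- constants on segments towards x₀ are in the closure
  have hconstcl : ∀ x ∈ X, ∀ s : ℝ, s ∈ Set.Icc (0:ℝ) 1 →
      ContinuousAffineMap.const ℝ U ((1-s) • x + s • x₀) ∈ closure S := by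
    intro x hx s hs
    set Bad : Set ℝ := {r : ℝ | (1-r) • x + r • x₀ ∈ (A : Set V)} with hBaddef
    have hBad : Bad.Subsingleton := by
      intro a ha b hb
      by_contra hab
      apply hx₀A
      have h1 : ((1-a) • x + a • x₀) -ᵥ ((1-b) • x + b • x₀) ∈ A.direction :=
        AffineSubspace.vsub_mem_direction ha hb
      rw [vsub_eq_sub] at h1
      have h2 : ((1-a) • x + a • x₀) - ((1-b) • x + b • x₀) = (a-b) • (x₀ - x) := by module
      rw [h2] at h1
      have hd : x₀ - x ∈ A.direction := by
        have h3 := A.direction.smul_mem (a-b)⁻¹ h1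
        rwa [smul_smul, inv_mul_cancel₀ (sub_ne_zero.mpr hab), one_smul] at h3
      have hx₀eq : x₀ = (1-a) • (x₀ - x) +ᵥ ((1-a) • x + a • x₀) := by
        rw [vadd_eq_add]; module
      rw [hx₀eq]
      exact AffineSubspace.vadd_mem_of_mem_direction (A.direction.smul_mem _ hd) ha
    have hsc : s ∈ closure (Set.Icc (0:ℝ) 1 \ Bad) := ComplAux.dense_aux hBad hs
    have hγ : Continuous fun r : ℝ =>
        ContinuousAffineMap.const ℝ U ((1-r) • x + r • x₀) := by
      apply ComplAux.continuous_constCAM.comp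
      exact ((continuous_const.sub continuous_id).smul continuous_const).add
        (continuous_id.smul continuous_const)
    have hmaps : Set.MapsTo (fun r : ℝ =>
        ContinuousAffineMap.const ℝ U ((1-r) • x + r • x₀)) (Set.Icc (0:ℝ) 1 \ Bad) S := by
      rintro r ⟨⟨hr0, hr1⟩, hrB⟩
      have hpX : (1-r) • x + r • x₀ ∈ X :=
        hXconv hx hx₀X (by linarith) (by linarith) (by ring)
      constructor
      · rintro v ⟨z, hz, rfl⟩
        simpa [ContinuousAffineMap.coe_const] using hpX
      · rw [Set.eq_empty_iff_forall_notMem]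
        rintro v ⟨⟨z, hz, rfl⟩, hv⟩
        apply hrB
        have : (ContinuousAffineMap.const ℝ U ((1-r) • x + r • x₀) : U → V) z
            = (1-r) • x + r • x₀ := by simp [ContinuousAffineMap.coe_const]
        rw [this] at hv
        exact hfYA hv
    exact map_mem_closure (f := fun r : ℝ =>
      ContinuousAffineMap.const ℝ U ((1-r) • x + r • x₀)) hγ hsc hmaps
  -- the homotopy preserves the closure of S
  have hFmem : ∀ t : ℝ, 0 ≤ t → t ≤ 1 → ∀ g ∈ closure S,
      ComplAux.F x₀ z₀ t g ∈ closure S := by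
    intro t ht0 ht1 g hg
    rcases le_or_gt t (1/2) with h | h
    · have hσ : max (2*t-1) 0 = 0 := max_eq_right (by linarith)
      have hcont : Continuous fun h : U →ᴬ[ℝ] V => ComplAux.F x₀ z₀ t h :=
        (ComplAux.F_cont x₀ z₀).comp (continuous_const.prodMk continuous_id)
      refine map_mem_closure hcont hg ?_
      intro h' hh'
      have himg : ⇑(ComplAux.F x₀ z₀ t h') '' Z ⊆ ⇑h' '' Z := by
        rintro v ⟨z, hz, rfl⟩
        refine ⟨min (2*t) 1 • z₀ + (1 - min (2*t) 1) • z, ?_, ?_⟩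
        · exact hZconv hz₀ hz (le_min (by linarith) (by norm_num))
            (by have := min_le_right (2*t) 1; linarith) (by ring)
        · rw [ComplAux.F_apply, hσ]
          simp
      constructor
      · exact himg.trans hh'.1
      · exact Set.subset_empty_iff.mp
          (hh'.2 ▸ Set.inter_subset_inter_left _ himg)
    · have hτ : min (2*t) 1 = 1 := min_eq_right (by linarith)
      have hσs : max (2*t-1) 0 = 2*t-1 := max_eq_left (by linarith)
      have hgz₀X : g z₀ ∈ X := hclX g hg z₀ hz₀
      have hkey := hconstcl (g z₀) hgz₀X (2*t-1) ⟨by linarith, by linarith⟩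
      have hEq : ComplAux.F x₀ z₀ t g
          = ContinuousAffineMap.const ℝ U ((1-(2*t-1)) • g z₀ + (2*t-1) • x₀) := by
        ext u
        rw [ComplAux.F_apply, hτ, hσs]
        simp [ContinuousAffineMap.coe_const]
        module
      rw [hEq]
      exact hkey
  refine ⟨⟨g₀, subset_closure hg₀S⟩, ?_⟩
  rw [contractible_iff_id_nullhomotopic]
  refine ⟨⟨g₀, subset_closure hg₀S⟩, ⟨?_⟩⟩
  exact
    { toFun := fun p =>
        ⟨ComplAux.F x₀ z₀ (p.1 : ℝ) (p.2 : U →ᴬ[ℝ] V),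
          hFmem _ (unitInterval.nonneg p.1) (unitInterval.le_one p.1) _ p.2.2⟩
      continuous_toFun := by
        apply Continuous.subtype_mk
        exact (ComplAux.F_cont x₀ z₀).comp
          ((continuous_subtype_val.comp continuous_fst).prodMk
            (continuous_subtype_val.comp continuous_snd))
      map_zero_left := by
        intro g
        apply Subtype.ext
        show ComplAux.F x₀ z₀ ((0 : unitInterval) : ℝ) (g : U →ᴬ[ℝ] V) = (g : U →ᴬ[ℝ] V)
        rw [show ((0 : unitInterval) : ℝ) = 0 from rfl, ComplAux.F_zero]
      map_one_left := by
        intro g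
        apply Subtype.ext
        show ComplAux.F x₀ z₀ ((1 : unitInterval) : ℝ) (g : U →ᴬ[ℝ] V) = g₀
        rw [show ((1 : unitInterval) : ℝ) = 1 from rfl, ComplAux.F_one] }
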